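/- Let α, β ∈ ℂ and let f : ℤ → ℂ be a sequence with f_n ≠ 0 for all n ∈ ℤ satisfying f_{n-1} (f_n)^2 f_{n+1} = α f_n + β for all n ∈ ℤ. Then the quantity J_n = f_{n-1} f_n + α (1/f_{n-1} + 1/f_n) + β/(f_{n-1} f_n) is a conserved quantity, i.e. J_n is independent of n. -/

import Mathlib

/-- For a nonvanishing solution `f` of `f_{n-1} f_n^2 f_{n+1} = α f_n + β`,
the quantity `J_n = f_{n-1} f_n + α (1/f_{n-1} + 1/f_n) + β/(f_{n-1} f_n)` is conserved. -/
theorem map_somos4_conserved_J (α β : ℂ) (f : ℤ → ℂ)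
    (hne : ∀ n : ℤ, f n ≠ 0)
    (hf : ∀ n : ℤ, f (n - 1) * (f n) ^ 2 * f (n + 1) = α * f n + β)
    (J : ℤ → ℂ)
    (hJ : ∀ n : ℤ, J n = f (n - 1) * f n + α * (1 / f (n - 1) + 1 / f n)
      + β / (f (n - 1) * f n)) :
    ∀ m n : ℤ, J m = J n := by
  have key : ∀ n : ℤ, J (n + 1) = J n := by
    intro n
    have h := hf n
    have h1 : f (n + 1 - 1) = f n := by ring_nf
    rw [hJ, hJ, h1]
    have hn1 := hne (n - 1)
    have hn := hne n
    have hn2 := hne (n + 1)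
    field_simp
    linear_combination (f (n+1) - f (n-1)) * h
  have base : ∀ n : ℤ, J n = J 0 := by
    intro n
    induction n using Int.induction_on with
    | zero => rfl
    | succ k ih => rw [key k, ih]
    | pred k ih => rw [← ih, ← key (-k - 1)]; ring_nf
  intro m n; rw [base m, base n]
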